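/- Let D be a small category and X : D → Type* a functor (a diagram of sets/spaces). If T : D → Type* satisfies colim_D T = * (a one-point set), then T is connected in the sense that any natural transformation from T to a coproduct X ⊔ Y of diagrams factors through one of the summands. -/

import Mathlib

open CategoryTheory CategoryTheory.Limits

universe v

section Aux

variable {D : Type v} [SmallCategory D] (X Y : D ⥤ Type v)

/-- The "side indicator" map to the constant `ULift Bool` diagram. -/
noncomputable def sideMap : X ⨿ Y ⟶ (Functor.const D).obj (ULift.{v} Bool) :=
  coprod.desc ⟨fun _ => ↾fun _ => ⟨false⟩, fun _ _ _ => rfl⟩ ⟨fun _ => ↾fun _ => ⟨true⟩, fun _ _ _ => rfl⟩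

lemma sideMap_inl (d : D) (x : X.obj d) :
    (sideMap X Y).app d ((coprod.inl : X ⟶ X ⨿ Y).app d x) = ⟨false⟩ := by
  show ((coprod.inl : X ⟶ X ⨿ Y) ≫ sideMap X Y).app d x = ⟨false⟩
  rw [sideMap, coprod.inl_desc]
  rfl

lemma sideMap_inr (d : D) (y : Y.obj d) :
    (sideMap X Y).app d ((coprod.inr : Y ⟶ X ⨿ Y).app d y) = ⟨true⟩ := by
  show ((coprod.inr : Y ⟶ X ⨿ Y) ≫ sideMap X Y).app d y = ⟨true⟩
  rw [sideMap, coprod.inr_desc]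
  rfl

lemma dichotomy (d : D) (z : (X ⨿ Y).obj d) :
    (∃ x, (coprod.inl : X ⟶ X ⨿ Y).app d x = z) ∨
    (∃ y, (coprod.inr : Y ⟶ X ⨿ Y).app d y = z) := by
  obtain ⟨j, w, hw⟩ := CategoryTheory.FunctorToTypes.jointly_surjective' (pair X Y) d z
  obtain ⟨_ | _⟩ := j
  · exact Or.inl ⟨w, hw.symm⟩
  · exact Or.inr ⟨w, hw.symm⟩

lemma comparison_injective (d : D) :
    Function.Injective (coprodComparison ((evaluation D (Type v)).obj d) X Y) := by
  have : IsIso (coprodComparison ((evaluation D (Type v)).obj d) X Y) := by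
    rw [← PreservesColimitPair.iso_hom]; infer_instance
  exact ((isIso_iff_bijective _).mp this).injective

lemma inl_app_injective (d : D) :
    Function.Injective ((coprod.inl : X ⟶ X ⨿ Y).app d) := by
  have h : (coprod.inl : X ⟶ X ⨿ Y).app d =
      ((evaluation D (Type v)).obj d).map (coprod.inl : X ⟶ X ⨿ Y) := rfl
  rw [h, ← coprodComparison_inl]
  have hinl : Function.Injective (coprod.inl : X.obj d ⟶ X.obj d ⨿ Y.obj d) := by
    intro a b hab
    have h2 := Types.binaryCoproductIso_inl_comp_hom (X.obj d) (Y.obj d)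
    have : Sum.inl (β := Y.obj d) a = Sum.inl b := by
      have e1 := types_congr_hom h2 a
      have e2 := types_congr_hom h2 b
      simp only [types_comp_apply, TypeCat.ofHom_apply] at e1 e2
      rw [← e1, ← e2]
      exact congrArg (fun z => (Types.binaryCoproductIso (X.obj d) (Y.obj d)).hom z) hab
    exact Sum.inl.inj this
  exact (comparison_injective X Y d).comp hinl

lemma inr_app_injective (d : D) :
    Function.Injective ((coprod.inr : Y ⟶ X ⨿ Y).app d) := by
  have h : (coprod.inr : Y ⟶ X ⨿ Y).app d =
      ((evaluation D (Type v)).obj d).map (coprod.inr : Y ⟶ X ⨿ Y) := rfl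
  rw [h, ← coprodComparison_inr]
  have hinr : Function.Injective (coprod.inr : Y.obj d ⟶ X.obj d ⨿ Y.obj d) := by
    intro a b hab
    have h2 := Types.binaryCoproductIso_inr_comp_hom (X.obj d) (Y.obj d)
    have : Sum.inr (α := X.obj d) a = Sum.inr b := by
      have e1 := types_congr_hom h2 a
      have e2 := types_congr_hom h2 b
      simp only [types_comp_apply, TypeCat.ofHom_apply] at e1 e2
      rw [← e1, ← e2]
      exact congrArg (fun z => (Types.binaryCoproductIso (X.obj d) (Y.obj d)).hom z) hab
    exact Sum.inr.inj this
  exact (comparison_injective X Y d).comp hinr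

end Aux

/-- Orbits are connected: if `T : D ⥤ Type` has a one-point colimit, then any natural
transformation from `T` to a coproduct of diagrams factors through one of the summands. -/
theorem orbit_connected {D : Type v} [SmallCategory D]
    (T X Y : D ⥤ Type v)
    (h₁ : Nonempty (colimit T)) (h₂ : Subsingleton (colimit T)) :
    ∀ α : T ⟶ X ⨿ Y,
      (∃ β : T ⟶ X, β ≫ coprod.inl = α) ∨ (∃ β : T ⟶ Y, β ≫ coprod.inr = α) := by
  intro α
  -- the indicator cocone
  let c : Cocone T := ⟨ULift.{v} Bool, α ≫ sideMap X Y⟩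
  let desc : colimit T → ULift.{v} Bool := colimit.desc T c
  obtain ⟨p⟩ := h₁
  have key : ∀ (d : D) (t : T.obj d),
      (sideMap X Y).app d (α.app d t) = desc p := by
    intro d t
    have h : colimit.ι T d ≫ colimit.desc T c = c.ι.app d := colimit.ι_desc c d
    have h2 := types_congr_hom h t
    simp only [types_comp_apply] at h2
    have h3 : c.ι.app d t = (sideMap X Y).app d (α.app d t) := rfl
    rw [h3] at h2
    rw [← h2]
    exact congrArg desc (Subsingleton.elim _ _)
  cases hb : (desc p).down with
  | false =>
    left
    have mem : ∀ (d : D) (t : T.obj d),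
        ∃ x, (coprod.inl : X ⟶ X ⨿ Y).app d x = α.app d t := by
      intro d t
      rcases dichotomy X Y d (α.app d t) with h | ⟨y, hy⟩
      · exact h
      · exfalso
        have hk := key d t
        rw [← hy, sideMap_inr] at hk
        have : true = (desc p).down := congrArg ULift.down hk
        rw [hb] at this
        exact Bool.noConfusion this
    choose f hf using fun d => mem d
    refine ⟨⟨fun d => ↾(f d), ?_⟩, ?_⟩
    · intro d d' g
      ext t
      apply inl_app_injective X Y
      have h1 := types_congr_hom ((coprod.inl : X ⟶ X ⨿ Y).naturality g) (f d t)
      have h2 := types_congr_hom (α.naturality g) t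
      simp only [types_comp_apply, TypeCat.ofHom_apply, TypeCat.Fun.toFun_apply] at h1 h2 ⊢
      rw [hf d' (T.map g t), h2, ← hf d t]
      exact h1.symm
    · ext d t
      exact hf d t
  | true =>
    right
    have mem : ∀ (d : D) (t : T.obj d),
        ∃ y, (coprod.inr : Y ⟶ X ⨿ Y).app d y = α.app d t := by
      intro d t
      rcases dichotomy X Y d (α.app d t) with ⟨x, hx⟩ | h
      · exfalso
        have hk := key d t
        rw [← hx, sideMap_inl] at hk
        have : false = (desc p).down := congrArg ULift.down hk
        rw [hb] at this
        exact Bool.noConfusion this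
      · exact h
    choose f hf using fun d => mem d
    refine ⟨⟨fun d => ↾(f d), ?_⟩, ?_⟩
    · intro d d' g
      ext t
      apply inr_app_injective X Y
      have h1 := types_congr_hom ((coprod.inr : Y ⟶ X ⨿ Y).naturality g) (f d t)
      have h2 := types_congr_hom (α.naturality g) t
      simp only [types_comp_apply, TypeCat.ofHom_apply, TypeCat.Fun.toFun_apply] at h1 h2 ⊢
      rw [hf d' (T.map g t), h2, ← hf d t]
      exact h1.symm
    · ext d t
      exact hf d t
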